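/- Pushforward by inverse stereographic projection is a homeomorphism onto its image: the map T_* sending a probability measure μ on ℂ to its pushforward T_*μ on the sphere S is a homeomorphism from M₁(ℂ) (with the weak topology) onto the subset {σ ∈ M₁(S) : σ({(0,0,1)}) = 0} of probability measures on S giving no mass to the north pole (with the weak topology). -/

import Mathlib

open MeasureTheory Filter
open scoped ENNReal NNReal

noncomputable section

/-- The logarithmic kernel `log (1 / |x - y|)`. -/
def logKernel {E : Type*} [PseudoMetricSpace E] (x y : E) : ℝ := Real.log (1 / dist x y)

/-- The mutual logarithmic energy `I(μ,ν) = ∬ log (1/|x-y|) dμ(x) dν(y)`, as an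
extended real number (defined through positive and negative parts). -/
def mutualEnergy {E : Type*} [MeasurableSpace E] [PseudoMetricSpace E]
    (μ ν : Measure E) : EReal :=
  ((∫⁻ p : E × E, ENNReal.ofReal (logKernel p.1 p.2) ∂(μ.prod ν) : ℝ≥0∞) : EReal)
    - ((∫⁻ p : E × E, ENNReal.ofReal (-logKernel p.1 p.2) ∂(μ.prod ν) : ℝ≥0∞) : EReal)

/-- The logarithmic energy `I(μ) = I(μ,μ)`. -/
def logEnergy {E : Type*} [MeasurableSpace E] [PseudoMetricSpace E] (μ : Measure E) : EReal :=
  mutualEnergy μ μ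

/-- The real value of the mutual energy (meaningful when the mutual energy is finite). -/
def mutualEnergyR {E : Type*} [MeasurableSpace E] [PseudoMetricSpace E]
    (μ ν : Measure E) : ℝ :=
  (mutualEnergy μ ν).toReal

/-- A set has positive capacity if it carries a probability measure with finite
logarithmic energy. -/
def PositiveCapacity {E : Type*} [MeasurableSpace E] [PseudoMetricSpace E] (Δ : Set E) : Prop :=
  ∃ σ : Measure E, IsProbabilityMeasure σ ∧ σ Δᶜ = 0 ∧ logEnergy σ ≠ ⊤ ∧ logEnergy σ ≠ ⊥

/-- Positive part of an extended real number, valued in `ℝ≥0∞`. -/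
def erealPos (x : EReal) : ℝ≥0∞ := if x = ⊤ then ⊤ else ENNReal.ofReal x.toReal

/-- Integral of an `EReal`-valued function, as an `EReal` (via positive and negative parts). -/
def eIntegral {E : Type*} [MeasurableSpace E] (μ : Measure E) (f : E → EReal) : EReal :=
  ((∫⁻ x, erealPos (f x) ∂μ : ℝ≥0∞) : EReal) - ((∫⁻ x, erealPos (-(f x)) ∂μ : ℝ≥0∞) : EReal)

/-- Inverse stereographic projection from `ℂ` onto the sphere of radius `1/2`
centered at `(0,0,1/2)` in `ℝ³`. -/
def stereo (x : ℂ) : EuclideanSpace ℝ (Fin 3) :=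
  (EuclideanSpace.equiv (Fin 3) ℝ).symm
    ![x.re / (1 + ‖x‖ ^ 2), x.im / (1 + ‖x‖ ^ 2),
      ‖x‖ ^ 2 / (1 + ‖x‖ ^ 2)]

/-- The north pole `(0,0,1)` of the sphere `S`. -/
def northPole : EuclideanSpace ℝ (Fin 3) := (EuclideanSpace.equiv (Fin 3) ℝ).symm ![0, 0, 1]

end

noncomputable section

open MeasureTheory Filter
open scoped ENNReal NNReal

/-- The sphere `S = {(x₁,x₂,x₃) : x₁² + x₂² + (x₃ - 1/2)² = 1/4}` in `ℝ³`. -/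
def sphereS : Set (EuclideanSpace ℝ (Fin 3)) :=
  {p | p 0 ^ 2 + p 1 ^ 2 + (p 2 - 1 / 2) ^ 2 = 1 / 4}

namespace StereoAux

open Set Topology

def invStereo (p : EuclideanSpace ℝ (Fin 3)) : ℂ :=
  (↑(p 0 / (1 - p 2)) : ℂ) + (↑(p 1 / (1 - p 2)) : ℂ) * Complex.I

lemma invStereo_re (p : EuclideanSpace ℝ (Fin 3)) : (invStereo p).re = p 0 / (1 - p 2) := by
  simp only [invStereo, Complex.add_re, Complex.mul_re, Complex.ofReal_re, Complex.ofReal_im,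
    Complex.I_re, Complex.I_im]
  ring

lemma invStereo_im (p : EuclideanSpace ℝ (Fin 3)) : (invStereo p).im = p 1 / (1 - p 2) := by
  simp only [invStereo, Complex.add_im, Complex.mul_im, Complex.ofReal_re, Complex.ofReal_im,
    Complex.I_re, Complex.I_im]
  ring

lemma stereo_zero (x : ℂ) : stereo x 0 = x.re / (1 + ‖x‖ ^ 2) := rfl
lemma stereo_one (x : ℂ) : stereo x 1 = x.im / (1 + ‖x‖ ^ 2) := rfl
lemma stereo_two (x : ℂ) : stereo x 2 = ‖x‖ ^ 2 / (1 + ‖x‖ ^ 2) := rfl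
lemma northPole_zero : northPole 0 = 0 := rfl
lemma northPole_one : northPole 1 = 0 := rfl
lemma northPole_two : northPole 2 = 1 := rfl

lemma one_add_sq_ne (x : ℂ) : (1 : ℝ) + ‖x‖ ^ 2 ≠ 0 := by positivity

lemma measurable_invStereo : Measurable invStereo := by
  have h0 : Measurable fun p : EuclideanSpace ℝ (Fin 3) => p 0 / (1 - p 2) :=
    ((EuclideanSpace.proj (0:Fin 3) (𝕜 := ℝ)).continuous.measurable).div
      (measurable_const.sub (EuclideanSpace.proj (2:Fin 3) (𝕜 := ℝ)).continuous.measurable)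
  have h1 : Measurable fun p : EuclideanSpace ℝ (Fin 3) => p 1 / (1 - p 2) :=
    ((EuclideanSpace.proj (1:Fin 3) (𝕜 := ℝ)).continuous.measurable).div
      (measurable_const.sub (EuclideanSpace.proj (2:Fin 3) (𝕜 := ℝ)).continuous.measurable)
  exact (Complex.measurable_ofReal.comp h0).add
    ((Complex.measurable_ofReal.comp h1).mul_const Complex.I)

lemma continuous_stereo : Continuous stereo := by
  have hd : ∀ x : ℂ, (1 : ℝ) + ‖x‖ ^ 2 ≠ 0 := fun x => by positivity
  have hc : Continuous fun x : ℂ => 1 + ‖x‖ ^ 2 :=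
    continuous_const.add (continuous_norm.pow 2)
  refine (EuclideanSpace.equiv (Fin 3) ℝ).symm.continuous.comp ?_
  refine continuous_pi fun i => ?_
  fin_cases i <;> simp <;>
    [exact Complex.continuous_re.div hc hd; exact Complex.continuous_im.div hc hd;
     exact (continuous_norm.pow 2).div hc hd]

lemma stereo_mem_sphereS (x : ℂ) : stereo x ∈ sphereS := by
  have hd : (1 : ℝ) + ‖x‖ ^ 2 ≠ 0 := one_add_sq_ne x
  show (stereo x 0) ^ 2 + (stereo x 1) ^ 2 + (stereo x 2 - 1 / 2) ^ 2 = 1 / 4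
  rw [stereo_zero, stereo_one, stereo_two]
  rw [Complex.sq_norm, Complex.normSq_apply] at *
  field_simp
  ring

lemma stereo_ne_northPole (x : ℂ) : stereo x ≠ northPole := by
  intro h
  have h2 : stereo x 2 = northPole 2 := by rw [h]
  rw [stereo_two, northPole_two] at h2
  have hd : (1 : ℝ) + ‖x‖ ^ 2 ≠ 0 := one_add_sq_ne x
  rw [div_eq_one_iff_eq hd] at h2
  linarith [h2]

lemma invStereo_stereo (x : ℂ) : invStereo (stereo x) = x := by
  have hd : (1 : ℝ) + ‖x‖ ^ 2 ≠ 0 := one_add_sq_ne x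
  have key : 1 - stereo x 2 = 1 / (1 + ‖x‖ ^ 2) := by
    rw [stereo_two]; field_simp; ring
  apply Complex.ext
  · rw [invStereo_re, key, stereo_zero]; field_simp
  · rw [invStereo_im, key, stereo_one]; field_simp

lemma two_ne_one_of_mem (p : EuclideanSpace ℝ (Fin 3)) (hp : p ∈ sphereS) (hnp : p ≠ northPole) :
    p 2 ≠ 1 := by
  intro h2
  have hs : p 0 ^ 2 + p 1 ^ 2 + (p 2 - 1 / 2) ^ 2 = 1 / 4 := hp
  have h0 : p 0 = 0 := by nlinarith [sq_nonneg (p 0), sq_nonneg (p 1)]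
  have h1 : p 1 = 0 := by nlinarith [sq_nonneg (p 0), sq_nonneg (p 1)]
  apply hnp
  ext i
  fin_cases i
  · show p 0 = northPole 0
    rw [h0]; exact (northPole_zero).symm
  · show p 1 = northPole 1
    rw [h1]; exact (northPole_one).symm
  · show p 2 = northPole 2
    rw [h2]; exact (northPole_two).symm

lemma stereo_invStereo (p : EuclideanSpace ℝ (Fin 3)) (hp : p ∈ sphereS) (hnp : p ≠ northPole) :
    stereo (invStereo p) = p := by
  have h2 : p 2 ≠ 1 := two_ne_one_of_mem p hp hnp
  have hd : 1 - p 2 ≠ 0 := fun h => h2 (by linarith [sub_eq_zero.mp h])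
  have hs : p 0 ^ 2 + p 1 ^ 2 + (p 2 - 1 / 2) ^ 2 = 1 / 4 := hp
  have key : p 0 ^ 2 + p 1 ^ 2 = p 2 * (1 - p 2) := by nlinarith
  set x := invStereo p with hx
  have hre : x.re = p 0 / (1 - p 2) := invStereo_re p
  have him : x.im = p 1 / (1 - p 2) := invStereo_im p
  have habs : ‖x‖ ^ 2 = p 2 / (1 - p 2) := by
    rw [Complex.sq_norm, Complex.normSq_apply, hre, him]
    field_simp
    nlinarith [key]
  have hden : 1 + ‖x‖ ^ 2 = 1 / (1 - p 2) := by
    rw [habs]; field_simp; ring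
  ext i
  fin_cases i
  · show stereo x 0 = p 0
    rw [stereo_zero, hre, hden]; field_simp
  · show stereo x 1 = p 1
    rw [stereo_one, him, hden]; field_simp
  · show stereo x 2 = p 2
    rw [stereo_two, hden, habs]; field_simp


lemma isClosed_sphereS : IsClosed sphereS := by
  have hc : Continuous fun p : EuclideanSpace ℝ (Fin 3) =>
      p 0 ^ 2 + p 1 ^ 2 + (p 2 - 1 / 2) ^ 2 := by
    have h0 := (EuclideanSpace.proj (0:Fin 3) (𝕜 := ℝ)).continuous
    have h1 := (EuclideanSpace.proj (1:Fin 3) (𝕜 := ℝ)).continuous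
    have h2 := (EuclideanSpace.proj (2:Fin 3) (𝕜 := ℝ)).continuous
    exact ((h0.pow 2).add (h1.pow 2)).add ((h2.sub continuous_const).pow 2)
  exact isClosed_eq hc continuous_const

def U : Set (EuclideanSpace ℝ (Fin 3)) := {p | p 2 ≠ 1}

lemma isOpen_U : IsOpen U :=
  isOpen_compl_iff.mpr (isClosed_eq (EuclideanSpace.proj (2:Fin 3) (𝕜 := ℝ)).continuous
    continuous_const)

lemma continuousOn_invStereo : ContinuousOn invStereo U := by
  have h2 := (EuclideanSpace.proj (2:Fin 3) (𝕜 := ℝ)).continuous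
  have hden : ∀ p ∈ U, (1:ℝ) - p 2 ≠ 0 := fun p hp => sub_ne_zero.mpr (Ne.symm hp)
  have h0 : ContinuousOn (fun p : EuclideanSpace ℝ (Fin 3) => p 0 / (1 - p 2)) U :=
    (EuclideanSpace.proj (0:Fin 3) (𝕜 := ℝ)).continuous.continuousOn.div
      (continuous_const.sub h2).continuousOn hden
  have h1 : ContinuousOn (fun p : EuclideanSpace ℝ (Fin 3) => p 1 / (1 - p 2)) U :=
    (EuclideanSpace.proj (1:Fin 3) (𝕜 := ℝ)).continuous.continuousOn.div
      (continuous_const.sub h2).continuousOn hden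
  exact (Complex.continuous_ofReal.comp_continuousOn h0).add
    ((Complex.continuous_ofReal.comp_continuousOn h1).mul continuousOn_const)

lemma mem_sphereS_two_eq_one (p : EuclideanSpace ℝ (Fin 3)) (hp : p ∈ sphereS)
    (h2 : p 2 = 1) : p = northPole := by
  by_contra hne
  exact two_ne_one_of_mem p hp hne h2

lemma compl_U_null (σ : Measure (EuclideanSpace ℝ (Fin 3))) (h1 : σ sphereSᶜ = 0)
    (h2 : σ {northPole} = 0) : σ Uᶜ = 0 := by
  apply measure_mono_null _ (measure_union_null h1 h2)
  intro p hp
  simp only [U, Set.mem_compl_iff, Set.mem_setOf_eq, not_not] at hp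
  by_cases hps : p ∈ sphereS
  · exact Or.inr (mem_sphereS_two_eq_one p hps hp)
  · exact Or.inl hps

abbrev Tgt := {σ : ProbabilityMeasure (EuclideanSpace ℝ (Fin 3)) //
  (σ : Measure (EuclideanSpace ℝ (Fin 3))) sphereSᶜ = 0 ∧
  (σ : Measure (EuclideanSpace ℝ (Fin 3))) {northPole} = 0}

def J (μ : ProbabilityMeasure ℂ) : Tgt :=
  ⟨μ.map continuous_stereo.measurable.aemeasurable, by
    constructor
    · rw [ProbabilityMeasure.toMeasure_map,
        Measure.map_apply continuous_stereo.measurable isClosed_sphereS.measurableSet.compl]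
      have : stereo ⁻¹' sphereSᶜ = ∅ := by
        ext x; simp [stereo_mem_sphereS x]
      rw [this, measure_empty]
    · rw [ProbabilityMeasure.toMeasure_map,
        Measure.map_apply continuous_stereo.measurable (measurableSet_singleton _)]
      have : stereo ⁻¹' {northPole} = ∅ := by
        ext x; simp [stereo_ne_northPole x]
      rw [this, measure_empty]⟩

def K (σ : Tgt) : ProbabilityMeasure ℂ := σ.1.map measurable_invStereo.aemeasurable

lemma K_J (μ : ProbabilityMeasure ℂ) : K (J μ) = μ := by
  apply ProbabilityMeasure.toMeasure_injective
  show ((μ : Measure ℂ).map stereo).map invStereo = (μ : Measure ℂ)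
  rw [Measure.map_map measurable_invStereo continuous_stereo.measurable]
  have : invStereo ∘ stereo = id := funext invStereo_stereo
  rw [this, Measure.map_id]

lemma J_K (σ : Tgt) : J (K σ) = σ := by
  apply Subtype.ext
  apply ProbabilityMeasure.toMeasure_injective
  show (((σ.1 : Measure _).map invStereo).map stereo) = (σ.1 : Measure _)
  rw [Measure.map_map continuous_stereo.measurable measurable_invStereo]
  have hae : (stereo ∘ invStereo) =ᵐ[(σ.1 : Measure _)] id := by
    rw [Filter.EventuallyEq, ae_iff]
    apply measure_mono_null _ (measure_union_null σ.2.1 σ.2.2)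
    intro p hp
    simp only [Set.mem_setOf_eq, Function.comp_apply, id_eq] at hp
    by_cases hps : p ∈ sphereS
    · by_cases hnp : p = northPole
      · exact Or.inr hnp
      · exact absurd (stereo_invStereo p hps hnp) hp
    · exact Or.inl hps
  rw [Measure.map_congr hae, Measure.map_id]


lemma continuous_J : Continuous J :=
  Continuous.subtype_mk (ProbabilityMeasure.continuous_map continuous_stereo) _

lemma continuous_K : Continuous K := by
  rw [continuous_iff_seqContinuous]
  intro σs σ0 hconv
  show Tendsto (fun i => K (σs i)) atTop (𝓝 (K σ0))
  have hv : Tendsto (fun n => (σs n).1) atTop (𝓝 σ0.1) :=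
    ((continuous_subtype_val).tendsto σ0).comp hconv
  apply tendsto_of_forall_isOpen_le_liminf
  intro G hG
  set V := U ∩ invStereo ⁻¹' G with hVdef
  have hVopen : IsOpen V := continuousOn_invStereo.isOpen_inter_preimage isOpen_U hG
  have key : ∀ σ : Tgt, ((K σ : Measure ℂ)) G = (σ.1 : Measure _) V := by
    intro σ
    rw [show (K σ : Measure ℂ) = (σ.1 : Measure _).map invStereo from rfl,
      Measure.map_apply measurable_invStereo hG.measurableSet]
    have hnull : (σ.1 : Measure _) Uᶜ = 0 := compl_U_null _ σ.2.1 σ.2.2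
    apply le_antisymm
    · calc (σ.1 : Measure _) (invStereo ⁻¹' G)
          ≤ (σ.1 : Measure _) (V ∪ Uᶜ) := measure_mono (fun p hp => by
            by_cases h : p ∈ U
            · exact Or.inl ⟨h, hp⟩
            · exact Or.inr h)
        _ ≤ (σ.1 : Measure _) V + (σ.1 : Measure _) Uᶜ := measure_union_le _ _
        _ = (σ.1 : Measure _) V := by rw [hnull, add_zero]
    · exact measure_mono Set.inter_subset_right
  have port : (σ0.1 : Measure _) V ≤ atTop.liminf fun i => ((σs i).1 : Measure _) V :=
    ProbabilityMeasure.le_liminf_measure_open_of_tendsto hv hVopen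
  have aux : (↑(atTop.liminf fun i ↦ (K (σs i)) G) : ℝ≥0∞)
      = atTop.liminf fun i ↦ ((K (σs i)) G : ℝ≥0∞) := by
    refine Monotone.map_liminf_of_continuousAt (F := atTop) ENNReal.coe_mono
      (fun i => (K (σs i)) G) ?_ ?_ ?_
    · exact ENNReal.continuous_coe.continuousAt
    · exact IsBoundedUnder.isCoboundedUnder_ge ⟨1, by simp⟩
    · exact ⟨0, by simp⟩
  rw [← ENNReal.coe_le_coe, aux]
  simp only [ProbabilityMeasure.ennreal_coeFn_eq_coeFn_toMeasure]
  rw [key σ0]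
  refine port.trans (le_of_eq ?_)
  congr 1
  funext i
  exact (key (σs i)).symm

def Hhomeo : ProbabilityMeasure ℂ ≃ₜ Tgt where
  toFun := J
  invFun := K
  left_inv := K_J
  right_inv := J_K
  continuous_toFun := continuous_J
  continuous_invFun := continuous_K

end StereoAux

/-- The pushforward by the inverse stereographic projection `T` is a homeomorphism from
`M₁(ℂ)` (with the weak topology) onto the set of probability measures on the sphere `S`
giving no mass to the north pole `(0,0,1)` (with the weak topology). -/
theorem pushforward_stereo_homeomorph :
    ∃ H : ProbabilityMeasure ℂ ≃ₜ
        {σ : ProbabilityMeasure (EuclideanSpace ℝ (Fin 3)) //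
          (σ : Measure (EuclideanSpace ℝ (Fin 3))) sphereSᶜ = 0 ∧
          (σ : Measure (EuclideanSpace ℝ (Fin 3))) {northPole} = 0},
      ∀ μ : ProbabilityMeasure ℂ,
        ((H μ : ProbabilityMeasure (EuclideanSpace ℝ (Fin 3)))
            : Measure (EuclideanSpace ℝ (Fin 3)))
          = (μ : Measure ℂ).map stereo := by
  exact ⟨StereoAux.Hhomeo, fun μ => rfl⟩

end
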